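/- arXiv:1606.08649 — 4 statements merged into one kernel-verified Lean document; each statement's English description precedes it below -/
import Mathlib

section
/- For a monoid M the following are equivalent: (i) M is a group, i.e. every element of M is invertible; (ii) M is a Mal'tsev object of the category Mon of monoids; (iii) M is a protomodular object of Mon, i.e. every point over M in Mon is stably strong. -/
open CategoryTheory CategoryTheory.Limits

universe v u

variable {C : Type u} [Category.{v} C]

/-- A cospan `(r, s)` is jointly strongly epimorphic: whenever both `r` and `s`
factor through a monomorphism `m`, the monomorphism `m` is an isomorphism. -/
def JointlyStronglyEpi {X Y A : C} (r : X ⟶ A) (s : Y ⟶ A) : Prop :=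
  ∀ ⦃M : C⦄ (m : M ⟶ A), Mono m →
    (∃ r' : X ⟶ M, r' ≫ m = r) → (∃ s' : Y ⟶ M, s' ≫ m = s) → IsIso m

/-- A point `(f, s)` over `B` is strong: for every `g : X ⟶ B`, the second
projection of the pullback of `f` along `g` together with `s` is a jointly
strongly epimorphic pair. -/
def IsStrongPoint [HasPullbacks C] {A B : C} (f : A ⟶ B) (s : B ⟶ A) : Prop :=
  ∀ ⦃X : C⦄ (g : X ⟶ B), JointlyStronglyEpi (pullback.snd g f) s

/-- A point `(f, s)` over `B` is stably strong: every pullback of it along a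
morphism `g : X ⟶ B` is a strong point. -/
def IsStablyStrongPoint [HasPullbacks C] {A B : C} (f : A ⟶ B) (s : B ⟶ A)
    (hs : s ≫ f = 𝟙 B) : Prop :=
  ∀ ⦃X : C⦄ (g : X ⟶ B),
    IsStrongPoint (pullback.fst g f)
      (pullback.lift (𝟙 X) (g ≫ s) (by simp [hs]))

/-- An object `Y` is a Mal'tsev object: for every pullback of split
epimorphisms over `Y`, the two induced sections are jointly strongly
epimorphic. -/
def IsMaltsevObject [HasPullbacks C] (Y : C) : Prop :=
  ∀ ⦃A X : C⦄ (f : A ⟶ Y) (s : Y ⟶ A) (g : X ⟶ Y) (t : Y ⟶ X)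
    (hs : s ≫ f = 𝟙 Y) (ht : t ≫ g = 𝟙 Y),
    JointlyStronglyEpi
      (pullback.lift (𝟙 A) (f ≫ t) (by simp [ht]) : A ⟶ pullback f g)
      (pullback.lift (g ≫ s) (𝟙 X) (by simp [hs]) : X ⟶ pullback f g)

/-- An object `Y` is protomodular: every point over `Y` is stably strong. -/
def IsProtomodularObject [HasPullbacks C] (Y : C) : Prop :=
  ∀ ⦃A : C⦄ (f : A ⟶ Y) (s : Y ⟶ A) (hs : s ≫ f = 𝟙 Y), IsStablyStrongPoint f s hs

/-- `f` is a regular epimorphism. -/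
def IsRegularEpi {X Y : C} (f : X ⟶ Y) : Prop := Nonempty (RegularEpi f)

/-- A commutative square `f' ≫ β = α ≫ f` of regular epimorphisms is a regular
pushout if the comparison morphism into the pullback of `β` and `f` is a
regular epimorphism. -/
def IsRegularPushout [HasPullbacks C] {A' A B' B : C}
    (α : A' ⟶ A) (f' : A' ⟶ B') (f : A ⟶ B) (β : B' ⟶ B)
    (w : f' ≫ β = α ≫ f) : Prop :=
  _root_.IsRegularEpi α ∧ _root_.IsRegularEpi β ∧ _root_.IsRegularEpi f' ∧ _root_.IsRegularEpi f ∧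
    _root_.IsRegularEpi (pullback.lift f' α w)

/-- `Y` is a strongly unital object. -/
def StronglyUnitalObject [HasPullbacks C] [HasBinaryProducts C] (Y : C) : Prop :=
  IsStablyStrongPoint (prod.fst : Y ⨯ Y ⟶ Y) (prod.lift (𝟙 Y) (𝟙 Y)) (by exact prod.lift_fst _ _)

/-- `Y` is a unital object. -/
def UnitalObject [HasPullbacks C] [HasBinaryProducts C] [HasZeroMorphisms C]
    (Y : C) : Prop :=
  IsStablyStrongPoint (prod.fst : Y ⨯ Y ⟶ Y) (prod.lift (𝟙 Y) 0) (by exact prod.lift_fst _ _)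

/-- `Y` is a subtractive object: for every split right punctual span
`(s, f, g, t)` over `Y`, the composite `ker(g) ≫ f` is a regular epimorphism. -/
def SubtractiveObject [HasZeroMorphisms C] [HasKernels C] (Y : C) : Prop :=
  ∀ ⦃X Z : C⦄ (s : X ⟶ Z) (f : Z ⟶ X) (g : Z ⟶ Y) (t : Y ⟶ Z),
    s ≫ f = 𝟙 X → t ≫ g = 𝟙 Y → t ≫ f = 0 →
    _root_.IsRegularEpi (kernel.ι g ≫ f)

/-! ### Auxiliary material for `statement0` -/

section Aux

open CategoryTheory Limits

namespace StmtAux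

/-! #### Jointly strongly epimorphic cospans in `MonCat` via submonoid closure -/

lemma monCat_jse_of_closure {X Y A : MonCat.{u}} (r : X ⟶ A) (s : Y ⟶ A)
    (hcl : Submonoid.closure (Set.range r ∪ Set.range s) = ⊤) :
    JointlyStronglyEpi r s := by
  intro N m hm hr hs'
  obtain ⟨r', hr'⟩ := hr
  obtain ⟨s', hs'⟩ := hs'
  have hminj : Function.Injective m :=
    (ConcreteCategory.mono_iff_injective_of_preservesPullback m).1 hm
  have hrange : Submonoid.closure (Set.range r ∪ Set.range s) ≤
      MonoidHom.mrange (show ↥N →* ↥A from m.hom) := by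
    apply Submonoid.closure_le.2
    rintro a (⟨x, rfl⟩ | ⟨y, rfl⟩)
    · exact MonoidHom.mem_mrange.2 ⟨r' x, by rw [← hr']; rfl⟩
    · exact MonoidHom.mem_mrange.2 ⟨s' y, by rw [← hs']; rfl⟩
  have hsurj : Function.Surjective m := fun a =>
    MonoidHom.mem_mrange.1 (hrange (hcl ▸ Submonoid.mem_top a))
  let e : ↥N ≃* ↥A := MulEquiv.ofBijective (show ↥N →* ↥A from m.hom) ⟨hminj, hsurj⟩
  refine ⟨⟨(show A ⟶ N from MonCat.ofHom e.symm.toMonoidHom), ?_, ?_⟩⟩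
  · exact MonCat.ext fun x => e.symm_apply_apply x
  · exact MonCat.ext fun a => e.apply_symm_apply a

lemma monCat_closure_of_jse {X Y A : MonCat.{u}} (r : X ⟶ A) (s : Y ⟶ A)
    (h : JointlyStronglyEpi r s) :
    Submonoid.closure (Set.range r ∪ Set.range s) = ⊤ := by
  set N := Submonoid.closure (Set.range r ∪ Set.range s) with hN
  let m : MonCat.of ↥N ⟶ A := MonCat.ofHom N.subtype
  have hm : Mono m := ConcreteCategory.mono_of_injective _ Subtype.val_injective
  have h1 : ∃ r' : X ⟶ MonCat.of ↥N, r' ≫ m = r :=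
    ⟨show X ⟶ MonCat.of ↥N from
        MonCat.ofHom ((r.hom : ↥X →* ↥A).codRestrict N fun x =>
          Submonoid.subset_closure (Or.inl ⟨x, rfl⟩)),
      MonCat.ext fun x => rfl⟩
  have h2 : ∃ s' : Y ⟶ MonCat.of ↥N, s' ≫ m = s :=
    ⟨show Y ⟶ MonCat.of ↥N from
        MonCat.ofHom ((s.hom : ↥Y →* ↥A).codRestrict N fun y =>
          Submonoid.subset_closure (Or.inr ⟨y, rfl⟩)),
      MonCat.ext fun y => rfl⟩
  have hiso : IsIso m := h m hm h1 h2
  have hsurj : Function.Surjective m := by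
    intro a
    have h' := ConcreteCategory.congr_hom (IsIso.inv_hom_id m) a
    exact ⟨(CategoryTheory.inv m) a, h'⟩
  rw [eq_top_iff]
  rintro a -
  obtain ⟨n, rfl⟩ := hsurj a
  exact n.2

lemma mem_closure_pair {Z Z' P : MonCat.{u}} (r : Z ⟶ P) (s' : Z' ⟶ P)
    (z : ↥Z) (z' : ↥Z') (p : ↥P) (h : p = r z * s' z') :
    p ∈ Submonoid.closure (Set.range r ∪ Set.range s') :=
  h ▸ mul_mem (Submonoid.subset_closure (Or.inl ⟨z, rfl⟩))
    (Submonoid.subset_closure (Or.inr ⟨z', rfl⟩))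

/-! #### A concrete description of pullbacks in `MonCat` -/

variable {A X B : MonCat.{u}} (f : A ⟶ B) (g : X ⟶ B)

/-- The concrete pullback submonoid. -/
def pbSub : Submonoid (↥A × ↥X) where
  carrier := {p | f p.1 = g p.2}
  one_mem' := by simp
  mul_mem' {p q} hp hq := by
    simp only [Set.mem_setOf_eq, Prod.fst_mul, Prod.snd_mul, map_mul] at *
    rw [hp, hq]

def pbFst : MonCat.of ↥(pbSub f g) ⟶ A :=
  MonCat.ofHom ((MonoidHom.fst ↥A ↥X).comp (pbSub f g).subtype)

def pbSnd : MonCat.of ↥(pbSub f g) ⟶ X :=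
  MonCat.ofHom ((MonoidHom.snd ↥A ↥X).comp (pbSub f g).subtype)

lemma pb_w : pbFst f g ≫ f = pbSnd f g ≫ g := MonCat.ext fun p => p.2

noncomputable def pbComp : MonCat.of ↥(pbSub f g) ⟶ pullback f g :=
  pullback.lift (pbFst f g) (pbSnd f g) (pb_w f g)

/-- The canonical hom from the abstract pullback to the concrete one. -/
noncomputable def pbRes : ↥(pullback f g) →* ↥(pbSub f g) where
  toFun p := ⟨(pullback.fst f g p, pullback.snd f g p), by
      have h := ConcreteCategory.congr_hom (pullback.condition (f := f) (g := g)) p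
      exact h⟩
  map_one' := Subtype.ext (Prod.ext (map_one _) (map_one _))
  map_mul' p q := Subtype.ext (Prod.ext (map_mul _ _ _) (map_mul _ _ _))

lemma pbRes_pbComp (k : ↥(pbSub f g)) : pbRes f g (pbComp f g k) = k := by
  apply Subtype.ext
  apply Prod.ext
  · exact ConcreteCategory.congr_hom (pullback.lift_fst (pbFst f g) (pbSnd f g) (pb_w f g)) k
  · exact ConcreteCategory.congr_hom (pullback.lift_snd (pbFst f g) (pbSnd f g) (pb_w f g)) k

lemma pbComp_pbRes (p : ↥(pullback f g)) : pbComp f g (pbRes f g p) = p := by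
  have hh : (show (pullback f g : MonCat.{u}) ⟶ MonCat.of ↥(pbSub f g) from MonCat.ofHom (pbRes f g)) ≫
      pbComp f g = 𝟙 (pullback f g) := by
    apply pullback.hom_ext
    · rw [Category.assoc, Category.id_comp]
      rw [show pbComp f g ≫ pullback.fst f g = pbFst f g from pullback.lift_fst _ _ _]
      exact MonCat.ext fun p => rfl
    · rw [Category.assoc, Category.id_comp]
      rw [show pbComp f g ≫ pullback.snd f g = pbSnd f g from pullback.lift_snd _ _ _]
      exact MonCat.ext fun p => rfl
  exact ConcreteCategory.congr_hom hh p

noncomputable def pbMk (a : ↥A) (x : ↥X) (h : f a = g x) : ↥(pullback f g) :=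
  pbComp f g ⟨(a, x), h⟩

@[simp] lemma pbMk_fst (a : ↥A) (x : ↥X) (h : f a = g x) :
    pullback.fst f g (pbMk f g a x h) = a :=
  ConcreteCategory.congr_hom (pullback.lift_fst (pbFst f g) (pbSnd f g) (pb_w f g)) ⟨(a, x), h⟩

@[simp] lemma pbMk_snd (a : ↥A) (x : ↥X) (h : f a = g x) :
    pullback.snd f g (pbMk f g a x h) = x :=
  ConcreteCategory.congr_hom (pullback.lift_snd (pbFst f g) (pbSnd f g) (pb_w f g)) ⟨(a, x), h⟩

lemma pb_elem_ext {p q : ↥(pullback f g)}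
    (h1 : pullback.fst f g p = pullback.fst f g q)
    (h2 : pullback.snd f g p = pullback.snd f g q) : p = q := by
  rw [← pbComp_pbRes f g p, ← pbComp_pbRes f g q]
  congr 1
  exact Subtype.ext (Prod.ext h1 h2)

lemma pb_cond (p : ↥(pullback f g)) :
    f (pullback.fst f g p) = g (pullback.snd f g p) := by
  have h := ConcreteCategory.congr_hom (pullback.condition (f := f) (g := g)) p
  simpa using h

end StmtAux

end Aux

section WordAux

open CategoryTheory Limits

namespace StmtAux

/-! #### The free product `M ⋆ ℕ`, implemented as a monoid of words -/

/-- A word `hd • y • t₀ • y • t₁ • ⋯` in the free product of `M` with the free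
monoid on one generator `y`; the list `tl` records, in reverse order, the scalars
following each occurrence of `y`. -/
structure Wd (M : Type) where
  hd : M
  tl : List M

namespace Wd

variable {M : Type} [Monoid M]

/-- Multiplication of words. -/
def mul : Wd M → Wd M → Wd M
  | ⟨a, []⟩, ⟨b, l⟩ => ⟨a * b, l⟩
  | ⟨a, h :: t⟩, ⟨b, l⟩ => ⟨a, l ++ (h * b) :: t⟩

instance : Mul (Wd M) := ⟨mul⟩
instance : One (Wd M) := ⟨⟨1, []⟩⟩

@[simp] lemma nil_mul (a b : M) (l : List M) :
    (⟨a, []⟩ : Wd M) * ⟨b, l⟩ = ⟨a * b, l⟩ := rfl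

@[simp] lemma cons_mul (a b h : M) (t l : List M) :
    (⟨a, h :: t⟩ : Wd M) * ⟨b, l⟩ = ⟨a, l ++ (h * b) :: t⟩ := rfl

lemma one_def : (1 : Wd M) = ⟨1, []⟩ := rfl

instance : Monoid (Wd M) where
  one_mul x := by obtain ⟨b, l⟩ := x; simp [one_def]
  mul_one x := by obtain ⟨a, _ | ⟨h, t⟩⟩ := x <;> simp [one_def]
  mul_assoc x y z := by
    obtain ⟨a, _ | ⟨h, t⟩⟩ := x <;> obtain ⟨b, _ | ⟨h', t'⟩⟩ := y <;>
      obtain ⟨c, l⟩ := z <;> simp [mul_assoc]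

@[simp] lemma tl_length_mul (x y : Wd M) :
    (x * y).tl.length = x.tl.length + y.tl.length := by
  obtain ⟨a, _ | ⟨h, t⟩⟩ := x <;> obtain ⟨b, l⟩ := y <;> simp <;> omega

/-- Evaluation of a reversed tail list, substituting `m` for `y`. -/
def evl (m : M) : List M → M
  | [] => 1
  | h :: t => evl m t * (m * h)

lemma evl_append (m : M) (l l' : List M) :
    evl m (l ++ l') = evl m l' * evl m l := by
  induction l with
  | nil => simp [evl]
  | cons h t ih => simp [evl, ih, mul_assoc]

/-- Evaluation hom `Wd M →* M`, substituting `m` for `y`. -/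
def ev (m : M) : Wd M →* M where
  toFun x := x.hd * evl m x.tl
  map_one' := by simp [one_def, evl]
  map_mul' x y := by
    obtain ⟨a, _ | ⟨h, t⟩⟩ := x <;> obtain ⟨b, l⟩ := y <;>
      simp [evl, evl_append, mul_assoc]

@[simp] lemma ev_apply (m : M) (x : Wd M) : ev m x = x.hd * evl m x.tl := rfl

/-- The inclusion `M →* Wd M`. -/
def ι (M : Type) [Monoid M] : M →* Wd M where
  toFun a := ⟨a, []⟩
  map_one' := rfl
  map_mul' a b := rfl

@[simp] lemma ι_apply (a : M) : ι M a = ⟨a, []⟩ := rfl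

@[simp] lemma ev_ι (m a : M) : ev m (ι M a) = a := by simp [evl]

/-- The element `y`. -/
def Y : Wd M := ⟨1, [1]⟩

@[simp] lemma ev_Y (m : M) : ev m (Y : Wd M) = m := by simp [Y, evl]

end Wd

/-! #### The invariant used to prove that Mal'tsev/protomodular monoids are groups -/

open Wd

variable {M : Type} [Monoid M]

/-- The invariant: a classification of the pairs of words that can appear in the
submonoid generated by the two canonical sections of the pullback. -/
def Inv2 (m : M) (p : Wd M × Wd M) : Prop :=
  2 ≤ p.1.tl.length ∨ 2 ≤ p.2.tl.length ∨
  (∃ α, p.1 = ⟨α, []⟩ ∧ p.2 = ⟨α, []⟩) ∨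
  (∃ u v, p.1 = ⟨u, [v]⟩ ∧ p.2 = ⟨u * m * v, []⟩) ∨
  (∃ c d, p.1 = ⟨c * m * d, []⟩ ∧ p.2 = ⟨c, [d]⟩) ∨
  (∃ u w d, p.1 = ⟨u, [w * m * d]⟩ ∧ p.2 = ⟨u * m * w, [d]⟩) ∨
  (∃ c w v, p.1 = ⟨c * m * w, [v]⟩ ∧ p.2 = ⟨c, [w * m * v]⟩)

lemma inv2_one (m : M) : Inv2 m 1 :=
  Or.inr (Or.inr (Or.inl ⟨1, rfl, rfl⟩))

lemma inv2_mul (m : M) (p q : Wd M × Wd M) (hp : Inv2 m p) (hq : Inv2 m q) :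
    Inv2 m (p * q) := by
  obtain ⟨p1, p2⟩ := p
  obtain ⟨q1, q2⟩ := q
  simp only [Inv2, Prod.mk_mul_mk] at *
  rcases hp with hp|hp|⟨α,rfl,rfl⟩|⟨u,v,rfl,rfl⟩|⟨c,d,rfl,rfl⟩|⟨u,w,d,rfl,rfl⟩|⟨c,w,v,rfl,rfl⟩
  · exact Or.inl (by simp <;> omega)
  · exact Or.inr (Or.inl (by simp <;> omega))
  · -- p = (α, α)
    rcases hq with hq|hq|⟨β,rfl,rfl⟩|⟨u,v,rfl,rfl⟩|⟨c,d,rfl,rfl⟩|⟨u,w,d,rfl,rfl⟩|⟨c,w,v,rfl,rfl⟩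
    · exact Or.inl (by simp <;> omega)
    · exact Or.inr (Or.inl (by simp <;> omega))
    · exact Or.inr (Or.inr (Or.inl ⟨α * β, by simp, by simp⟩))
    · exact Or.inr (Or.inr (Or.inr (Or.inl ⟨α * u, v, by simp, by simp [mul_assoc]⟩)))
    · exact Or.inr (Or.inr (Or.inr (Or.inr (Or.inl
        ⟨α * c, d, by simp [mul_assoc], by simp⟩))))
    · exact Or.inr (Or.inr (Or.inr (Or.inr (Or.inr (Or.inl
        ⟨α * u, w, d, by simp, by simp [mul_assoc]⟩)))))
    · exact Or.inr (Or.inr (Or.inr (Or.inr (Or.inr (Or.inr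
        ⟨α * c, w, v, by simp [mul_assoc], by simp⟩)))))
  · -- p = (u y v, umv)
    rcases hq with hq|hq|⟨β,rfl,rfl⟩|⟨u',v',rfl,rfl⟩|⟨c,d,rfl,rfl⟩|⟨u',w,d,rfl,rfl⟩|⟨c,w,v',rfl,rfl⟩
    · exact Or.inl (by simp <;> omega)
    · exact Or.inr (Or.inl (by simp <;> omega))
    · exact Or.inr (Or.inr (Or.inr (Or.inl ⟨u, v * β, by simp, by simp [mul_assoc]⟩)))
    · exact Or.inl (by simp)
    · exact Or.inr (Or.inr (Or.inr (Or.inr (Or.inr (Or.inl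
        ⟨u, v * c, d, by simp [mul_assoc], by simp [mul_assoc]⟩)))))
    · exact Or.inl (by simp)
    · exact Or.inl (by simp)
  · -- p = (cmd, c y d)
    rcases hq with hq|hq|⟨β,rfl,rfl⟩|⟨u,v,rfl,rfl⟩|⟨c',d',rfl,rfl⟩|⟨u,w,d',rfl,rfl⟩|⟨c',w,v,rfl,rfl⟩
    · exact Or.inl (by simp <;> omega)
    · exact Or.inr (Or.inl (by simp <;> omega))
    · exact Or.inr (Or.inr (Or.inr (Or.inr (Or.inl
        ⟨c, d * β, by simp [mul_assoc], by simp⟩))))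
    · exact Or.inr (Or.inr (Or.inr (Or.inr (Or.inr (Or.inr
        ⟨c, d * u, v, by simp [mul_assoc], by simp [mul_assoc]⟩)))))
    · exact Or.inr (Or.inl (by simp))
    · exact Or.inr (Or.inl (by simp))
    · exact Or.inr (Or.inl (by simp))
  · -- p = (u y wmd, umw y d)  (case CL)
    rcases hq with hq|hq|⟨β,rfl,rfl⟩|⟨u',v,rfl,rfl⟩|⟨c,d',rfl,rfl⟩|⟨u',w',d',rfl,rfl⟩|⟨c,w',v,rfl,rfl⟩
    · exact Or.inl (by simp <;> omega)
    · exact Or.inr (Or.inl (by simp <;> omega))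
    · exact Or.inr (Or.inr (Or.inr (Or.inr (Or.inr (Or.inl
        ⟨u, w, d * β, by simp [mul_assoc], by simp⟩)))))
    · exact Or.inl (by simp)
    · exact Or.inr (Or.inl (by simp))
    · exact Or.inl (by simp)
    · exact Or.inl (by simp)
  · -- p = (cmw y v, c y wmv)  (case CR)
    rcases hq with hq|hq|⟨β,rfl,rfl⟩|⟨u,v',rfl,rfl⟩|⟨c',d,rfl,rfl⟩|⟨u,w',d,rfl,rfl⟩|⟨c',w',v',rfl,rfl⟩
    · exact Or.inl (by simp <;> omega)
    · exact Or.inr (Or.inl (by simp <;> omega))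
    · exact Or.inr (Or.inr (Or.inr (Or.inr (Or.inr (Or.inr
        ⟨c, w, v * β, by simp, by simp [mul_assoc]⟩)))))
    · exact Or.inl (by simp)
    · exact Or.inr (Or.inl (by simp))
    · exact Or.inl (by simp)
    · exact Or.inr (Or.inl (by simp))

lemma closure_inv2 (m : M) {P : Type} [Monoid P] (e1 e2 : P →* Wd M) (U : Set P)
    (hU : ∀ u ∈ U, Inv2 m (e1 u, e2 u)) {p : P} (hp : p ∈ Submonoid.closure U) :
    Inv2 m (e1 p, e2 p) := by
  induction hp using Submonoid.closure_induction with
  | mem x hx => exact hU x hx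
  | one => simpa using (show Inv2 m (1, 1) from inv2_one m)
  | mul x y hx hy ihx ihy =>
      have h := inv2_mul m _ _ ihx ihy
      simpa [Prod.mk_mul_mk] using h

lemma inv2_GA (m : M) (a : Wd M) : Inv2 m (a, ι M (ev m a)) := by
  obtain ⟨u, _ | ⟨v, _ | ⟨v', t⟩⟩⟩ := a
  · exact Or.inr (Or.inr (Or.inl ⟨u, rfl, by simp [evl]⟩))
  · exact Or.inr (Or.inr (Or.inr (Or.inl ⟨u, v, rfl, by simp [evl, mul_assoc]⟩)))
  · exact Or.inl (by simp <;> omega)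

lemma inv2_GB (m : M) (x : Wd M) : Inv2 m (ι M (ev m x), x) := by
  obtain ⟨c, _ | ⟨d, _ | ⟨d', t⟩⟩⟩ := x
  · exact Or.inr (Or.inr (Or.inl ⟨c, by simp [evl], rfl⟩))
  · exact Or.inr (Or.inr (Or.inr (Or.inr (Or.inl
      ⟨c, d, by simp [evl, mul_assoc], rfl⟩))))
  · exact Or.inr (Or.inl (by simp <;> omega))

lemma inv2_YY (m : M) (h : Inv2 m ((Y : Wd M), (Y : Wd M))) : IsUnit m := by
  rcases h with h|h|⟨α,h1,h2⟩|⟨u,v,h1,h2⟩|⟨c,d,h1,h2⟩|⟨u,w,d,h1,h2⟩|⟨c,w,v,h1,h2⟩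
  · simp [Y] at h
  · simp [Y] at h
  · simp [Y] at h2
  · simp [Y] at h2
  · simp [Y] at h1
  · simp only [Y, Wd.mk.injEq, List.cons.injEq, and_true] at h1 h2
    obtain ⟨hu, hwmd⟩ := h1
    obtain ⟨humw, hd⟩ := h2
    refine ⟨⟨m, w, ?_, ?_⟩, rfl⟩
    · rw [humw, ← hu, one_mul]
    · rw [hwmd, ← hd, mul_one]
  · simp only [Y, Wd.mk.injEq, List.cons.injEq, and_true] at h1 h2
    obtain ⟨hcmw, hv⟩ := h1
    obtain ⟨hc, hwmv⟩ := h2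
    refine ⟨⟨m, w, ?_, ?_⟩, rfl⟩
    · rw [hcmw, ← hc, one_mul]
    · rw [hwmv, ← hv, mul_one]

end StmtAux

end WordAux

section Directions

open CategoryTheory Limits

namespace StmtAux

open Wd

lemma lift_fst_apply {W X Y Z : MonCat.{u}} (f : X ⟶ Z) (g : Y ⟶ Z) (h : W ⟶ X)
    (k : W ⟶ Y) (w : h ≫ f = k ≫ g) (x : ↥W) :
    pullback.fst f g (pullback.lift h k w x) = h x :=
  ConcreteCategory.congr_hom (pullback.lift_fst h k w) x

lemma lift_snd_apply {W X Y Z : MonCat.{u}} (f : X ⟶ Z) (g : Y ⟶ Z) (h : W ⟶ X)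
    (k : W ⟶ Y) (w : h ≫ f = k ≫ g) (x : ↥W) :
    pullback.snd f g (pullback.lift h k w x) = k x :=
  ConcreteCategory.congr_hom (pullback.lift_snd h k w) x

variable (M : Type) [Monoid M]

/-- The evaluation morphism in `MonCat`. -/
def fev (m : M) : MonCat.of (Wd M) ⟶ MonCat.of M := MonCat.ofHom (ev m)

/-- The inclusion morphism in `MonCat`. -/
def sι : MonCat.of M ⟶ MonCat.of (Wd M) := MonCat.ofHom (ι M)

@[simp] lemma fev_apply (m : M) (x : Wd M) : fev M m x = ev m x := rfl

@[simp] lemma sι_apply (α : M) : sι M α = ι M α := rfl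

lemma sι_fev (m : M) : sι M ≫ fev M m = 𝟙 (MonCat.of M) :=
  MonCat.ext fun α => ev_ι m α

/-! #### (ii) ⟹ (i) -/

lemma maltsev_imp_group (h2 : IsMaltsevObject (MonCat.of M)) : ∀ m : M, IsUnit m := by
  intro m
  have hjse := h2 (fev M m) (sι M) (fev M m) (sι M) (sι_fev M m) (sι_fev M m)
  have hcl := monCat_closure_of_jse _ _ hjse
  have hmem := (Submonoid.eq_top_iff' _).mp hcl (pbMk (fev M m) (fev M m) (Y : Wd M) Y rfl)
  have hinv : Inv2 m
      (pullback.fst (fev M m) (fev M m) (pbMk (fev M m) (fev M m) (Y : Wd M) Y rfl),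
       pullback.snd (fev M m) (fev M m) (pbMk (fev M m) (fev M m) (Y : Wd M) Y rfl)) := by
    refine closure_inv2 m
      (show ↥(pullback (fev M m) (fev M m)) →* Wd M from (pullback.fst (fev M m) (fev M m)).hom)
      (show ↥(pullback (fev M m) (fev M m)) →* Wd M from (pullback.snd (fev M m) (fev M m)).hom)
      _ ?_ hmem
    rintro u (⟨a, rfl⟩ | ⟨x, rfl⟩)
    · show Inv2 m (pullback.fst (fev M m) (fev M m) _, pullback.snd (fev M m) (fev M m) _)
      rw [lift_fst_apply, lift_snd_apply]
      simpa [sι, fev] using inv2_GA m a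
    · show Inv2 m (pullback.fst (fev M m) (fev M m) _, pullback.snd (fev M m) (fev M m) _)
      rw [lift_fst_apply, lift_snd_apply]
      simpa [sι, fev] using inv2_GB m x
  rw [pbMk_fst, pbMk_snd] at hinv
  exact inv2_YY m hinv

/-! #### (iii) ⟹ (i) -/

lemma proto_imp_group (h3 : IsProtomodularObject (MonCat.of M)) : ∀ m : M, IsUnit m := by
  intro m
  have hjse := h3 (fev M m) (sι M) (sι_fev M m) (fev M m) (fev M m ≫ sι M)
  have hcl := monCat_closure_of_jse _ _ hjse
  have hmem := (Submonoid.eq_top_iff' _).mp hcl (pbMk (fev M m) (fev M m) (Y : Wd M) Y rfl)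
  have hinv : Inv2 m
      (pullback.fst (fev M m) (fev M m) (pbMk (fev M m) (fev M m) (Y : Wd M) Y rfl),
       pullback.snd (fev M m) (fev M m) (pbMk (fev M m) (fev M m) (Y : Wd M) Y rfl)) := by
    refine closure_inv2 m
      (show ↥(pullback (fev M m) (fev M m)) →* Wd M from (pullback.fst (fev M m) (fev M m)).hom)
      (show ↥(pullback (fev M m) (fev M m)) →* Wd M from (pullback.snd (fev M m) (fev M m)).hom)
      _ ?_ hmem
    rintro u (⟨q, rfl⟩ | ⟨x, rfl⟩)
    · show Inv2 m (pullback.fst (fev M m) (fev M m) _, pullback.snd (fev M m) (fev M m) _)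
      have hc1 := pb_cond (fev M m ≫ sι M) (pullback.fst (fev M m) (fev M m)) q
      have hc2 := pb_cond (fev M m) (fev M m)
        (pullback.snd (fev M m ≫ sι M) (pullback.fst (fev M m) (fev M m)) q)
      rw [← hc1] at hc2
      have h1 : pullback.fst (fev M m) (fev M m)
          (pullback.snd (fev M m ≫ sι M) (pullback.fst (fev M m) (fev M m)) q) =
          ι M (ev m (pullback.snd (fev M m) (fev M m)
            (pullback.snd (fev M m ≫ sι M) (pullback.fst (fev M m) (fev M m)) q))) := by
        rw [← hc1]
        simp only [ConcreteCategory.comp_apply, MonCat.coe_comp, Function.comp_apply, fev, sι, MonCat.hom_ofHom, fev_apply, sι_apply, ev_ι] at hc2 ⊢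
        rw [hc2]
      rw [h1]
      exact inv2_GB m _
    · show Inv2 m (pullback.fst (fev M m) (fev M m) _, pullback.snd (fev M m) (fev M m) _)
      rw [lift_fst_apply, lift_snd_apply]
      simpa [sι, fev] using inv2_GA m x
  rw [pbMk_fst, pbMk_snd] at hinv
  exact inv2_YY m hinv

/-! #### (i) ⟹ (ii) -/

lemma group_imp_maltsev (hM : ∀ m : M, IsUnit m) : IsMaltsevObject (MonCat.of M) := by
  intro A X f s g t hs ht
  apply monCat_jse_of_closure
  rw [eq_top_iff]
  rintro p -
  obtain ⟨w, hw⟩ := hM (f (pullback.fst f g p))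
  have hga : g (pullback.snd f g p) = f (pullback.fst f g p) := (pb_cond f g p).symm
  have htg : ∀ α : M, g (t α) = α := fun α => by
    have h := ConcreteCategory.congr_hom ht α; simpa using h
  refine mem_closure_pair _ _ (pullback.fst f g p)
      (t ((w⁻¹ : Mˣ) : M) * pullback.snd f g p) p ?_
  apply pb_elem_ext f g
  · rw [map_mul, lift_fst_apply, lift_fst_apply]
    simp only [MonCat.coe_id, id_eq, MonCat.coe_comp, Function.comp_apply]
    rw [map_mul, htg, hga, ← hw, Units.inv_mul, map_one, mul_one]
  · rw [map_mul, lift_snd_apply, lift_snd_apply]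
    simp only [MonCat.coe_id, id_eq, MonCat.coe_comp, Function.comp_apply]
    rw [← hw, ← mul_assoc, ← map_mul, Units.mul_inv, map_one, one_mul]

/-! #### (i) ⟹ (iii) -/

lemma group_imp_proto (hM : ∀ m : M, IsUnit m) : IsProtomodularObject (MonCat.of M) := by
  intro A f s hs X g W h
  apply monCat_jse_of_closure
  rw [eq_top_iff]
  rintro p -
  obtain ⟨w, hw⟩ := hM (f (pullback.snd g f p))
  have hsf : ∀ α : M, f (s α) = α := fun α => by
    have h' := ConcreteCategory.congr_hom hs α; simpa using h'
  have hgf : g (pullback.fst g f p) = f (pullback.snd g f p) := pb_cond g f p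
  have hk : f (pullback.snd g f p * s ((w⁻¹ : Mˣ) : M)) = 1 := by
    rw [map_mul, hsf, ← hw, Units.mul_inv]
  refine mem_closure_pair _ _
      (pbMk h (pullback.fst g f) (1 : ↥W)
        (pbMk g f (1 : ↥X) (pullback.snd g f p * s ((w⁻¹ : Mˣ) : M))
          (by rw [map_one, hk]))
        (by rw [map_one, pbMk_fst]))
      (pullback.fst g f p) p ?_
  apply pb_elem_ext g f
  · rw [map_mul, pbMk_snd, pbMk_fst, lift_fst_apply]
    simp only [MonCat.coe_id, id_eq, one_mul]
  · rw [map_mul, pbMk_snd, pbMk_snd, lift_snd_apply]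
    simp only [MonCat.coe_comp, Function.comp_apply]
    rw [hgf, ← hw, mul_assoc, ← map_mul, Units.inv_mul, map_one, mul_one]

end StmtAux

end Directions

/-- For a monoid `M`, TFAE: (i) every element of `M` is invertible (`M` is a
group); (ii) `M` is a Mal'tsev object of `Mon`; (iii) `M` is a protomodular
object of `Mon`. -/
theorem statement0 (M : Type) [Monoid M] :
    List.TFAE [∀ m : M, IsUnit m,
      IsMaltsevObject (MonCat.of M),
      IsProtomodularObject (MonCat.of M)] := by
  tfae_have 1 → 2 := StmtAux.group_imp_maltsev M
  tfae_have 2 → 1 := StmtAux.maltsev_imp_group M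
  tfae_have 1 → 3 := StmtAux.group_imp_proto M
  tfae_have 3 → 1 := StmtAux.proto_imp_group M
  tfae_finish
end

section
/- In a regular category, stably strong points are closed under quotients: given points (f : A → B, s : B → A) and (f' : A' → B', s' : B' → A') together with regular epimorphisms α : A → A' and β : B → B' such that f' ∘ α = β ∘ f and α ∘ s = s' ∘ β, if (f, s) is a stably strong point then (f', s') is a stably strong point. -/
open CategoryTheory CategoryTheory.Limits

universe v u

variable {C : Type u} [Category.{v} C]

/-- In a regular category, stably strong points are closed under quotients. -/
theorem statement6 [HasFiniteLimits C]
    (hcoeq : ∀ {X Y : C} (f : X ⟶ Y),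
      HasCoequalizer (pullback.fst f f) (pullback.snd f f))
    (hstab : ∀ {X Y Z : C} (f : X ⟶ Z) (g : Y ⟶ Z),
      _root_.IsRegularEpi f → _root_.IsRegularEpi (pullback.snd f g))
    {A B A' B' : C}
    (f : A ⟶ B) (s : B ⟶ A) (hs : s ≫ f = 𝟙 B)
    (f' : A' ⟶ B') (s' : B' ⟶ A') (hs' : s' ≫ f' = 𝟙 B')
    (α : A ⟶ A') (β : B ⟶ B') (hα : _root_.IsRegularEpi α) (hβ : _root_.IsRegularEpi β)
    (w1 : α ≫ f' = f ≫ β) (w2 : s ≫ α = β ≫ s')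
    (h : IsStablyStrongPoint f s hs) :
    IsStablyStrongPoint f' s' hs' := by
  intro X g Y k M m hm fac1 fac2
  obtain ⟨u, hu⟩ := fac1
  obtain ⟨v, hv⟩ := fac2
  haveI : Mono m := hm
  -- upstairs base : pullback of β along g
  set q : pullback β g ⟶ X := pullback.snd β g with hq
  set b : pullback β g ⟶ B := pullback.fst β g with hb
  have hbq : b ≫ β = q ≫ g := pullback.condition
  have hPt : pullback.fst b f ≫ b = pullback.snd b f ≫ f := pullback.condition
  -- the comparison morphism κ from the upstairs pullback to the downstairs one
  have wκ : (pullback.fst b f ≫ q) ≫ g = (pullback.snd b f ≫ α) ≫ f' := by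
    calc (pullback.fst b f ≫ q) ≫ g = pullback.fst b f ≫ (q ≫ g) := Category.assoc _ _ _
      _ = pullback.fst b f ≫ (b ≫ β) := by rw [hbq]
      _ = (pullback.fst b f ≫ b) ≫ β := (Category.assoc _ _ _).symm
      _ = (pullback.snd b f ≫ f) ≫ β := by rw [hPt]
      _ = pullback.snd b f ≫ (f ≫ β) := Category.assoc _ _ _
      _ = pullback.snd b f ≫ (α ≫ f') := by rw [w1]
      _ = (pullback.snd b f ≫ α) ≫ f' := (Category.assoc _ _ _).symm
  set κ : pullback b f ⟶ pullback g f' :=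
    pullback.lift (pullback.fst b f ≫ q) (pullback.snd b f ≫ α) wκ with hκdef
  have hκfst : κ ≫ pullback.fst g f' = pullback.fst b f ≫ q := pullback.lift_fst _ _ _
  have hκsnd : κ ≫ pullback.snd g f' = pullback.snd b f ≫ α := pullback.lift_snd _ _ _
  -- κ is a strong epimorphism : it is iso-isomorphic to a pullback of α
  have hψw : pullback.snd b f ≫ α = κ ≫ pullback.snd g f' := hκsnd.symm
  set ψ : pullback b f ⟶ pullback α (pullback.snd g f') :=
    pullback.lift (pullback.snd b f) κ hψw with hψdef
  have hK : pullback.fst α (pullback.snd g f') ≫ α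
      = pullback.snd α (pullback.snd g f') ≫ pullback.snd g f' := pullback.condition
  have hP' : pullback.fst g f' ≫ g = pullback.snd g f' ≫ f' := pullback.condition
  have wx : (pullback.fst α (pullback.snd g f') ≫ f) ≫ β
      = (pullback.snd α (pullback.snd g f') ≫ pullback.fst g f') ≫ g := by
    calc (pullback.fst α (pullback.snd g f') ≫ f) ≫ β
        = pullback.fst α (pullback.snd g f') ≫ (f ≫ β) := Category.assoc _ _ _
      _ = pullback.fst α (pullback.snd g f') ≫ (α ≫ f') := by rw [w1]
      _ = (pullback.fst α (pullback.snd g f') ≫ α) ≫ f' := (Category.assoc _ _ _).symm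
      _ = (pullback.snd α (pullback.snd g f') ≫ pullback.snd g f') ≫ f' := by rw [hK]
      _ = pullback.snd α (pullback.snd g f') ≫ (pullback.snd g f' ≫ f') :=
          Category.assoc _ _ _
      _ = pullback.snd α (pullback.snd g f') ≫ (pullback.fst g f' ≫ g) := by rw [hP']
      _ = (pullback.snd α (pullback.snd g f') ≫ pullback.fst g f') ≫ g :=
          (Category.assoc _ _ _).symm
  set xt : pullback α (pullback.snd g f') ⟶ pullback β g :=
    pullback.lift (pullback.fst α (pullback.snd g f') ≫ f)
      (pullback.snd α (pullback.snd g f') ≫ pullback.fst g f') wx with hxtdef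
  have wφ : xt ≫ b = pullback.fst α (pullback.snd g f') ≫ f := pullback.lift_fst _ _ _
  set φ : pullback α (pullback.snd g f') ⟶ pullback b f :=
    pullback.lift xt (pullback.fst α (pullback.snd g f')) wφ with hφdef
  have hψφ : ψ ≫ φ = 𝟙 _ := by
    apply pullback.hom_ext
    · rw [Category.assoc, Category.id_comp]
      apply pullback.hom_ext
      · simp only [hφdef, hψdef, hxtdef, Category.assoc, pullback.lift_fst, hb,
          pullback.lift_fst_assoc]
        calc pullback.snd b f ≫ f = pullback.fst b f ≫ b := hPt.symm
          _ = pullback.fst b f ≫ pullback.fst β g := by rw [hb]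
      · simp only [hφdef, hψdef, hxtdef, Category.assoc, pullback.lift_snd, hq,
          pullback.lift_fst_assoc, pullback.lift_snd_assoc]
        rw [hκfst, hq]
    · rw [Category.assoc, hφdef, pullback.lift_snd, hψdef, pullback.lift_fst, Category.id_comp]
  have hφψ : φ ≫ ψ = 𝟙 _ := by
    apply pullback.hom_ext
    · rw [Category.assoc, hψdef, pullback.lift_fst, hφdef, pullback.lift_snd, Category.id_comp]
    · rw [Category.assoc, Category.id_comp, hψdef, pullback.lift_snd]
      apply pullback.hom_ext
      · simp only [Category.assoc, hκfst, hφdef, pullback.lift_fst_assoc, hxtdef,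
          hq, pullback.lift_snd]
      · simp only [Category.assoc, hκsnd, hφdef, pullback.lift_snd_assoc, hK]
  haveI : IsIso ψ := ⟨φ, hψφ, hφψ⟩
  obtain ⟨re⟩ := hstab α (pullback.snd g f') hα
  haveI : RegularEpi (pullback.snd α (pullback.snd g f')) := re
  haveI : StrongEpi (pullback.snd α (pullback.snd g f')) := by
    have := isRegularEpi_of_regularEpi re; infer_instance
  have hκeq : κ = ψ ≫ pullback.snd α (pullback.snd g f') := (pullback.lift_snd _ _ _).symm
  have hκstrong : StrongEpi κ := by
    rw [hκeq]; exact strongEpi_comp _ _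
  -- the upstairs point is strong
  have hst := h b
  set St : pullback β g ⟶ pullback b f :=
    pullback.lift (𝟙 _) (b ≫ s) (by simp [hs]) with hStdef
  -- pull back k along q
  set kt : pullback k q ⟶ pullback β g := pullback.snd k q with hktdef
  have hkq : pullback.fst k q ≫ k = kt ≫ q := pullback.condition
  set Ft : pullback b f ⟶ pullback β g := pullback.fst b f with hFtdef
  set πt : pullback kt Ft ⟶ pullback b f := pullback.snd kt Ft with hπtdef
  have hQt : pullback.fst kt Ft ≫ kt = πt ≫ Ft := pullback.condition
  -- the comparison ρ between the two iterated pullbacks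
  have wρ : (pullback.fst kt Ft ≫ pullback.fst k q) ≫ k = (πt ≫ κ) ≫ pullback.fst g f' := by
    calc (pullback.fst kt Ft ≫ pullback.fst k q) ≫ k
        = pullback.fst kt Ft ≫ (pullback.fst k q ≫ k) := Category.assoc _ _ _
      _ = pullback.fst kt Ft ≫ (kt ≫ q) := by rw [hkq]
      _ = (pullback.fst kt Ft ≫ kt) ≫ q := (Category.assoc _ _ _).symm
      _ = (πt ≫ Ft) ≫ q := by rw [hQt]
      _ = πt ≫ (Ft ≫ q) := Category.assoc _ _ _
      _ = πt ≫ (κ ≫ pullback.fst g f') := by rw [hκfst]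
      _ = (πt ≫ κ) ≫ pullback.fst g f' := (Category.assoc _ _ _).symm
  set ρ : pullback kt Ft ⟶ pullback k (pullback.fst g f') :=
    pullback.lift (pullback.fst kt Ft ≫ pullback.fst k q) (πt ≫ κ) wρ with hρdef
  -- the pulled-back monomorphism
  haveI : Mono (pullback.fst κ m) := pullback.fst_of_mono
  -- first factorization
  have w1' : πt ≫ κ = (ρ ≫ u) ≫ m := by
    rw [Category.assoc, hu, hρdef, pullback.lift_snd]
  set r' : pullback kt Ft ⟶ pullback κ m := pullback.lift πt (ρ ≫ u) w1' with hr'def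
  -- second factorization
  have w2' : St ≫ κ = (q ≫ v) ≫ m := by
    rw [Category.assoc, hv]
    apply pullback.hom_ext
    · simp only [Category.assoc, hκfst, hStdef, hFtdef, pullback.lift_fst,
        pullback.lift_fst_assoc, Category.id_comp, Category.comp_id]
    · simp only [Category.assoc, hκsnd, hStdef, pullback.lift_snd, pullback.lift_snd_assoc]
      rw [w2, ← Category.assoc, hbq, Category.assoc]
  set s₂ : pullback β g ⟶ pullback κ m := pullback.lift St (q ≫ v) w2' with hs₂def
  have hmt : IsIso (pullback.fst κ m) :=
    hst kt (pullback.fst κ m) inferInstance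
      ⟨r', pullback.lift_fst _ _ _⟩ ⟨s₂, pullback.lift_fst _ _ _⟩
  -- conclude: κ is a strong epi factoring through the mono m
  have hfactor : (inv (pullback.fst κ m) ≫ pullback.snd κ m) ≫ m = κ := by
    rw [Category.assoc, ← pullback.condition, IsIso.inv_hom_id_assoc]
  haveI : StrongEpi ((inv (pullback.fst κ m) ≫ pullback.snd κ m) ≫ m) := by
    rw [hfactor]; exact hκstrong
  haveI := strongEpi_of_strongEpi (inv (pullback.fst κ m) ≫ pullback.snd κ m) m
  exact isIso_of_mono_of_strongEpi m
end

section
/- A pointed regular category C is subtractive, meaning that every reflexive relation ⟨r₁, r₂⟩ : R → X × X which is right punctual is also left punctual, if and only if every object of C is a subtractive object. -/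
open CategoryTheory CategoryTheory.Limits

universe v u

variable {C : Type u} [Category.{v} C]

attribute [local simp] prod.lift_fst prod.lift_snd prod.lift_fst_assoc prod.lift_snd_assoc pullback.lift_fst pullback.lift_snd pullback.lift_fst_assoc pullback.lift_snd_assoc

section AuxiliaryLemmas

private lemma aux_mono_coeqDesc [HasPullbacks C]
    (hstab : ∀ {X Y Z : C} (f : X ⟶ Z) (g : Y ⟶ Z),
      _root_.IsRegularEpi f → _root_.IsRegularEpi (pullback.snd f g))
    {Z W : C} (φ : Z ⟶ W)
    [HasCoequalizer (pullback.fst φ φ) (pullback.snd φ φ)] :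
    Mono (coequalizer.desc φ pullback.condition) := by
  set a := pullback.fst φ φ with ha
  set b := pullback.snd φ φ with hb
  set e : Z ⟶ coequalizer a b := coequalizer.π a b with hee
  set m : coequalizer a b ⟶ W := coequalizer.desc φ pullback.condition with hm
  have he : e ≫ m = φ := coequalizer.π_desc _ _
  haveI hre : RegularEpi e := coequalizerRegular a b
  set δ : pullback m φ ⟶ coequalizer a b := pullback.fst m φ with hδ
  have hc2w : δ ≫ m = (pullback.snd m φ ≫ e) ≫ m := by
    rw [Category.assoc, he]; exact pullback.condition
  set c₂ : pullback m φ ⟶ pullback m m :=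
    pullback.lift δ (pullback.snd m φ ≫ e) hc2w with hc2
  have hj'w : (pullback.fst (pullback.snd m m) e ≫ pullback.fst m m) ≫ m
      = pullback.snd (pullback.snd m m) e ≫ φ := by
    rw [Category.assoc, pullback.condition (f := m) (g := m), ← Category.assoc,
      pullback.condition (f := pullback.snd m m) (g := e), Category.assoc, he]
  set j' : pullback (pullback.snd m m) e ⟶ pullback m φ :=
    pullback.lift (pullback.fst _ _ ≫ pullback.fst m m) (pullback.snd _ _) hj'w with hj'
  have hjw : c₂ ≫ pullback.snd m m = pullback.snd m φ ≫ e := pullback.lift_snd _ _ _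
  set j : pullback m φ ⟶ pullback (pullback.snd m m) e :=
    pullback.lift c₂ (pullback.snd m φ) hjw with hj
  haveI : IsIso j := by
    refine ⟨j', ?_, ?_⟩
    · apply pullback.hom_ext
      · simp [j, j', c₂, hδ]
      · simp [j, j']
    · apply pullback.hom_ext
      · apply pullback.hom_ext
        · simp [j, j', c₂, hδ]
        · simp [j, j', c₂, pullback.condition (f := pullback.snd m m) (g := e)]
      · simp [j, j']
  obtain ⟨hpe⟩ := hstab e (pullback.snd m m) ⟨hre⟩
  haveI := isRegularEpi_of_regularEpi hpe
  have hcfst : pullback.fst (pullback.snd m m) e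
      = (pullbackSymmetry e (pullback.snd m m)).inv ≫ pullback.snd e (pullback.snd m m) :=
    (pullbackSymmetry_inv_comp_snd e (pullback.snd m m)).symm
  haveI : Epi (pullback.fst (pullback.snd m m) e) := by rw [hcfst]; exact epi_comp _ _
  have hc2eq : c₂ = j ≫ pullback.fst (pullback.snd m m) e := by simp [j]
  haveI hec2 : Epi c₂ := by rw [hc2eq]; exact epi_comp _ _
  set c₁ : pullback δ e ⟶ pullback m φ := pullback.fst δ e with hc1
  obtain ⟨hpe1⟩ := hstab e δ ⟨hre⟩
  haveI := isRegularEpi_of_regularEpi hpe1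
  haveI : Epi c₁ := by
    have : c₁ = (pullbackSymmetry e δ).inv ≫ pullback.snd e δ :=
      (pullbackSymmetry_inv_comp_snd e δ).symm
    rw [this]; exact epi_comp _ _
  set c : pullback δ e ⟶ pullback m m := c₁ ≫ c₂ with hc
  have e1 : pullback.fst δ e ≫ δ = pullback.snd δ e ≫ e := pullback.condition
  have huw : pullback.snd δ e ≫ φ = (c₁ ≫ pullback.snd m φ) ≫ φ :=
    calc pullback.snd δ e ≫ φ = (pullback.snd δ e ≫ e) ≫ m := by rw [Category.assoc, he]
      _ = (pullback.fst δ e ≫ δ) ≫ m := by rw [e1]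
      _ = c₁ ≫ pullback.fst m φ ≫ m := by rw [hc1, Category.assoc, hδ]
      _ = c₁ ≫ pullback.snd m φ ≫ φ := by rw [pullback.condition (f := m) (g := φ)]
      _ = (c₁ ≫ pullback.snd m φ) ≫ φ := by rw [Category.assoc]
  set u : pullback δ e ⟶ pullback φ φ :=
    pullback.lift (pullback.snd δ e) (c₁ ≫ pullback.snd m φ) huw with hu
  have key : pullback.fst m m = pullback.snd m m := by
    have h1 : c ≫ pullback.fst m m = u ≫ a ≫ e := by
      have h1a : u ≫ a = pullback.snd δ e := by simp [hu, ha]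
      rw [← Category.assoc, h1a, ← e1]
      simp [hc, hc2, hc1]
    have h2 : c ≫ pullback.snd m m = u ≫ b ≫ e := by
      have h2a : u ≫ b = c₁ ≫ pullback.snd m φ := by simp [hu, hb]
      rw [← Category.assoc, h2a]
      simp only [hc, Category.assoc, hjw]
    have h3 : a ≫ e = b ≫ e := coequalizer.condition a b
    have : c ≫ pullback.fst m m = c ≫ pullback.snd m m := by rw [h1, h2, ← h3]
    exact (cancel_epi c).mp this
  constructor
  intro T x y hxy
  calc x = pullback.lift x y hxy ≫ pullback.fst m m := (pullback.lift_fst x y hxy).symm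
    _ = pullback.lift x y hxy ≫ pullback.snd m m := by rw [key]
    _ = y := pullback.lift_snd x y hxy

private lemma aux_isRegularEpi_of_strongEpi [HasPullbacks C]
    (hstab : ∀ {X Y Z : C} (f : X ⟶ Z) (g : Y ⟶ Z),
      _root_.IsRegularEpi f → _root_.IsRegularEpi (pullback.snd f g))
    {Z W : C} (h : Z ⟶ W) [StrongEpi h]
    [HasCoequalizer (pullback.fst h h) (pullback.snd h h)] :
    _root_.IsRegularEpi h := by
  haveI hmono : Mono (coequalizer.desc h pullback.condition) := aux_mono_coeqDesc hstab h
  set e := coequalizer.π (pullback.fst h h) (pullback.snd h h) with hee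
  set m := coequalizer.desc h pullback.condition with hm
  have he : e ≫ m = h := coequalizer.π_desc _ _
  have sq : CommSq e h m (𝟙 W) := ⟨by simp [he]⟩
  haveI : IsIso m := by
    refine ⟨sq.lift, ?_, sq.fac_right⟩
    haveI : Epi e := by
      haveI : RegularEpi e := coequalizerRegular _ _
      infer_instance
    rw [← cancel_epi e, ← Category.assoc, he, sq.fac_left, Category.comp_id]
  exact ⟨{ W := pullback h h
           left := pullback.fst h h
           right := pullback.snd h h
           w := pullback.condition
           isColimit := IsColimit.ofIsoColimit (colimit.isColimit _)
             (Cofork.ext (asIso m) (by simp [he]; exact he)) }⟩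

end AuxiliaryLemmas

/-- A pointed regular category is subtractive (every right punctual reflexive
relation is left punctual) iff every object is a subtractive object. -/
theorem statement13 [HasFiniteLimits C] [HasZeroObject C] [HasZeroMorphisms C]
    (hcoeq : ∀ {X Y : C} (f : X ⟶ Y),
      HasCoequalizer (pullback.fst f f) (pullback.snd f f))
    (hstab : ∀ {X Y Z : C} (f : X ⟶ Z) (g : Y ⟶ Z),
      _root_.IsRegularEpi f → _root_.IsRegularEpi (pullback.snd f g)) :
    (∀ ⦃X R : C⦄ (r : R ⟶ X ⨯ X), Mono r →
      (∃ d : X ⟶ R, d ≫ r = prod.lift (𝟙 X) (𝟙 X)) →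
      (∃ p : X ⟶ R, p ≫ r = prod.lift 0 (𝟙 X)) →
      (∃ q : X ⟶ R, q ≫ r = prod.lift (𝟙 X) 0)) ↔
    (∀ Y : C, SubtractiveObject Y) := by
  constructor
  · -- subtractive category implies every object is subtractive
    intro hrel Y X Z s f g t hs ht htf
    set φ : Z ⟶ X ⨯ Y := prod.lift f g with hφ
    haveI := hcoeq φ
    set e := coequalizer.π (pullback.fst φ φ) (pullback.snd φ φ) with hee
    set mm := coequalizer.desc φ pullback.condition with hmm
    have he : e ≫ mm = φ := coequalizer.π_desc _ _
    haveI hmono : Mono mm := aux_mono_coeqDesc hstab φ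
    haveI : RegularEpi e := coequalizerRegular _ _
    have hd : prod.lift (𝟙 Z) (𝟙 Z) ≫ prod.map f g = e ≫ mm := by
      rw [he, hφ]
      apply Limits.prod.hom_ext <;> simp
    have hp : prod.lift 0 (𝟙 Z) ≫ prod.map f g = (g ≫ t ≫ e) ≫ mm := by
      have h1 : (g ≫ t ≫ e) ≫ mm = g ≫ t ≫ φ := by simp [Category.assoc, he]
      rw [h1, hφ]
      apply Limits.prod.hom_ext <;> simp [htf, ht]
    obtain ⟨q, hq⟩ := @hrel Z (pullback (prod.map f g) mm)
      (pullback.fst (prod.map f g) mm) inferInstance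
      ⟨pullback.lift (prod.lift (𝟙 Z) (𝟙 Z)) e hd, pullback.lift_fst _ _ _⟩
      ⟨pullback.lift (prod.lift 0 (𝟙 Z)) (g ≫ t ≫ e) hp, pullback.lift_fst _ _ _⟩
    set u := q ≫ pullback.snd (prod.map f g) mm with hu
    have hum : u ≫ mm = prod.lift f 0 := by
      rw [hu, Category.assoc, ← pullback.condition, ← Category.assoc, hq]
      apply Limits.prod.hom_ext <;> simp
    set m2 := mm ≫ prod.snd with hm2
    have hu2 : u ≫ m2 = 0 := by
      rw [hm2, ← Category.assoc, hum]; simp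
    set u' := kernel.lift m2 u hu2 with hu'
    have hu'ι : u' ≫ kernel.ι m2 = u := kernel.lift_ι _ _ _
    have hsplit : (s ≫ u') ≫ (kernel.ι m2 ≫ mm ≫ prod.fst) = 𝟙 X := by
      have h1 : u ≫ mm ≫ prod.fst = f := by rw [← Category.assoc, hum]; simp
      calc (s ≫ u') ≫ kernel.ι m2 ≫ mm ≫ prod.fst
          = s ≫ (u' ≫ kernel.ι m2) ≫ mm ≫ prod.fst := by simp [Category.assoc]
        _ = s ≫ u ≫ mm ≫ prod.fst := by rw [hu'ι]
        _ = s ≫ f := by rw [h1]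
        _ = 𝟙 X := hs
    haveI : IsSplitEpi (kernel.ι m2 ≫ mm ≫ prod.fst) := ⟨⟨⟨s ≫ u', hsplit⟩⟩⟩
    obtain ⟨hπ⟩ := hstab e (kernel.ι m2) ⟨coequalizerRegular _ _⟩
    haveI := isRegularEpi_of_regularEpi hπ
    set w := pullback.fst e (kernel.ι m2) with hw
    have hwg : w ≫ g = 0 := by
      have hg : g = e ≫ m2 := by
        rw [hm2, ← Category.assoc, he, hφ]; simp
      have h0 : w ≫ e = pullback.snd e (kernel.ι m2) ≫ kernel.ι m2 := pullback.condition
      calc w ≫ g = w ≫ e ≫ m2 := congrArg (CategoryStruct.comp w) hg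
        _ = (w ≫ e) ≫ m2 := (Category.assoc _ _ _).symm
        _ = (pullback.snd e (kernel.ι m2) ≫ kernel.ι m2) ≫ m2 := by rw [h0]
        _ = pullback.snd e (kernel.ι m2) ≫ kernel.ι m2 ≫ m2 := Category.assoc _ _ _
        _ = 0 := by rw [kernel.condition, comp_zero]
    set v := kernel.lift g w hwg with hv
    have hvw : v ≫ kernel.ι g = w := kernel.lift_ι _ _ _
    have hcomp : v ≫ (kernel.ι g ≫ f) =
        pullback.snd e (kernel.ι m2) ≫ (kernel.ι m2 ≫ mm ≫ prod.fst) := by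
      have hf : f = e ≫ mm ≫ prod.fst := by rw [← Category.assoc, he, hφ]; simp
      calc v ≫ kernel.ι g ≫ f = w ≫ f := by rw [← Category.assoc, hvw]
        _ = w ≫ e ≫ mm ≫ prod.fst := congrArg (CategoryStruct.comp w) hf
        _ = (w ≫ e) ≫ mm ≫ prod.fst := (Category.assoc _ _ _).symm
        _ = (pullback.snd e (kernel.ι m2) ≫ kernel.ι m2) ≫ mm ≫ prod.fst := by
              rw [hw, pullback.condition]
        _ = _ := by simp [Category.assoc]
    haveI : StrongEpi (v ≫ (kernel.ι g ≫ f)) := by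
      rw [hcomp]; exact strongEpi_comp _ _
    haveI : StrongEpi (kernel.ι g ≫ f) := strongEpi_of_strongEpi v _
    haveI := hcoeq (kernel.ι g ≫ f)
    exact aux_isRegularEpi_of_strongEpi hstab _
  · -- every object subtractive implies the category is subtractive
    intro hsub X R r hr hd hp
    obtain ⟨d, hd⟩ := hd
    obtain ⟨p, hp⟩ := hp
    haveI : Mono r := hr
    have h1 : d ≫ (r ≫ prod.fst) = 𝟙 X := by rw [← Category.assoc, hd]; simp
    have h2 : p ≫ (r ≫ prod.snd) = 𝟙 X := by rw [← Category.assoc, hp]; simp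
    have h3 : p ≫ (r ≫ prod.fst) = 0 := by rw [← Category.assoc, hp]; simp
    obtain ⟨inst⟩ := hsub X d (r ≫ prod.fst) (r ≫ prod.snd) p h1 h2 h3
    haveI := isRegularEpi_of_regularEpi inst
    have hcomm : kernel.ι (r ≫ prod.snd) ≫ r =
        (kernel.ι (r ≫ prod.snd) ≫ (r ≫ prod.fst)) ≫ prod.lift (𝟙 X) 0 := by
      apply Limits.prod.hom_ext
      · simp
      · simp
    have sq : CommSq (kernel.ι (r ≫ prod.snd))
        (kernel.ι (r ≫ prod.snd) ≫ (r ≫ prod.fst)) r (prod.lift (𝟙 X) 0) := ⟨hcomm⟩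
    exact ⟨sq.lift, sq.fac_right⟩
end

section
/- In a finitely complete category, every protomodular object is a Mal'tsev object. -/
open CategoryTheory CategoryTheory.Limits

universe v u

variable {C : Type u} [Category.{v} C]

/-- In a finitely complete category, every protomodular object is a Mal'tsev
object. -/
theorem statement19 [HasFiniteLimits C] (Y : C)
    (h : IsProtomodularObject Y) : IsMaltsevObject Y := by
  intro A X f s g t hs ht M m hm hr hsfac
  obtain ⟨r', hr'⟩ := hr
  obtain ⟨s', hs'⟩ := hsfac
  have H := h g t ht f s m hm
  apply H
  · refine ⟨pullback.snd s (pullback.fst f g) ≫ pullback.snd f g ≫ s', ?_⟩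
    rw [Category.assoc, Category.assoc, hs']
    apply pullback.hom_ext
    · simp only [Category.assoc, pullback.lift_fst]
      rw [← pullback.condition_assoc, ← pullback.condition_assoc,
        reassoc_of% hs, pullback.condition]
    · simp
      erw [pullback.lift_snd, Category.comp_id]
  · exact ⟨r', hr'⟩
end
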